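/- arXiv:1408.1262 — 3 statements merged into one kernel-verified Lean document; each statement's English description precedes it below -/
import Mathlib

section
/- Let V ⊆ ℝ^d be a finite point configuration of Theta rank 1, i.e., Th(V) ≤ 1. Then the vanishing ideal I(V) ⊆ ℝ[x₁,…,x_d] admits a generating set consisting of polynomials of degree at most 2. -/
open MvPolynomial Set

noncomputable section

/-- `f` is an affine-linear polynomial (degree at most one). -/
def IsAffLin {ι : Type} (f : MvPolynomial ι ℝ) : Prop := f.totalDegree ≤ 1

/-- `f` is nonnegative on `V`. -/
def NonnegOn {ι : Type} (V : Set (ι → ℝ)) (f : MvPolynomial ι ℝ) : Prop :=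
  ∀ v ∈ V, 0 ≤ eval v f

/-- `ℓ` is `k`-sos with respect to `V`: on `V` it agrees with a sum of squares of
polynomials of degree at most `k`. -/
def IsKSos {ι : Type} (V : Set (ι → ℝ)) (k : ℕ) (ℓ : MvPolynomial ι ℝ) : Prop :=
  ∃ (s : ℕ) (h : Fin s → MvPolynomial ι ℝ),
    (∀ i, (h i).totalDegree ≤ k) ∧ ∀ v ∈ V, eval v ℓ = ∑ i, (eval v (h i)) ^ 2

/-- The Theta rank of a point configuration `V`. -/
def thetaRank {ι : Type} (V : Set (ι → ℝ)) : ℕ :=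
  sInf {k | ∀ ℓ, IsAffLin ℓ → NonnegOn V ℓ → IsKSos V k ℓ}

/-- `F` is a face of `V`. -/
def IsFaceOf {ι : Type} (V F : Set (ι → ℝ)) : Prop :=
  ∃ g, IsAffLin g ∧ NonnegOn V g ∧ F = {v ∈ V | eval v g = 0}

/-- `F` is a facet of `V`: an inclusion-maximal proper face. -/
def IsFacetOf {ι : Type} (V F : Set (ι → ℝ)) : Prop :=
  IsFaceOf V F ∧ F ≠ V ∧ ∀ F', IsFaceOf V F' → F' ≠ V → F ⊆ F' → F' = F

/-- `ℓ` is a facet-defining affine-linear function for `V`. -/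
def IsFacetDefining {ι : Type} (V : Set (ι → ℝ)) (ℓ : MvPolynomial ι ℝ) : Prop :=
  IsAffLin ℓ ∧ NonnegOn V ℓ ∧ IsFacetOf V {v ∈ V | eval v ℓ = 0}

/-- The levelness of a point configuration `V`. -/
def levelness {ι : Type} (V : Set (ι → ℝ)) : ℕ :=
  sInf {k | ∀ ℓ, IsFacetDefining V ℓ → ((fun v => eval v ℓ) '' V).ncard ≤ k}

namespace ThetaOneAux

variable {d : ℕ}

abbrev MP (d : ℕ) := MvPolynomial (Fin d) ℝ

lemma exists_indicator (V : Set (Fin d → ℝ)) (hVfin : V.Finite) (v : Fin d → ℝ) :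
    ∃ δ : MP d, δ.totalDegree ≤ hVfin.toFinset.card ∧ eval v δ = 1 ∧
      ∀ w ∈ V, w ≠ v → eval w δ = 0 := by
  classical
  set F : Finset (Fin d → ℝ) := hVfin.toFinset.erase v with hF
  have hne : ∀ w ∈ F, ∃ j, w j ≠ v j := fun w hw =>
    Function.ne_iff.mp (Finset.ne_of_mem_erase hw)
  choose j hj using hne
  refine ⟨∏ w ∈ F.attach,
      (C (v (j w.1 w.2) - w.1 (j w.1 w.2))⁻¹ * (X (j w.1 w.2) - C (w.1 (j w.1 w.2)))), ?_, ?_, ?_⟩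
  · calc (∏ w ∈ F.attach, _ : MP d).totalDegree
        ≤ ∑ w ∈ F.attach, (C (v (j w.1 w.2) - w.1 (j w.1 w.2))⁻¹ *
            (X (j w.1 w.2) - C (w.1 (j w.1 w.2)))).totalDegree :=
          totalDegree_finset_prod _ _
      _ ≤ ∑ _w ∈ F.attach, 1 := by
          refine Finset.sum_le_sum fun w _ => ?_
          refine (totalDegree_mul _ _).trans ?_
          simp only [totalDegree_C, zero_add]
          exact (totalDegree_sub _ _).trans (by simp)
      _ ≤ hVfin.toFinset.card := by
          simp only [Finset.sum_const, smul_eq_mul, mul_one, Finset.card_attach]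
          exact Finset.card_erase_le.trans le_rfl
  · rw [map_prod]
    refine Finset.prod_eq_one fun w _ => ?_
    have hz : v (j w.1 w.2) - w.1 (j w.1 w.2) ≠ 0 := sub_ne_zero_of_ne (hj w.1 w.2).symm
    simp [inv_mul_cancel₀ hz]
  · intro w hw hwv
    have hwF : w ∈ F := Finset.mem_erase.mpr ⟨hwv, hVfin.mem_toFinset.mpr hw⟩
    rw [map_prod]
    refine Finset.prod_eq_zero (Finset.mem_attach F ⟨w, hwF⟩) ?_
    simp

lemma H1_of_theta (V : Set (Fin d → ℝ)) (hVfin : V.Finite) (hTh : thetaRank V ≤ 1) :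
    ∀ ℓ : MP d, ℓ.totalDegree ≤ 1 → (∀ v ∈ V, 0 ≤ eval v ℓ) →
      ∃ (n : ℕ) (h : Fin n → MP d), (∀ i, (h i).totalDegree ≤ 1) ∧
        ∀ v ∈ V, eval v ℓ = ∑ i, (eval v (h i)) ^ 2 := by
  classical
  set S : Set ℕ := {k | ∀ ℓ, IsAffLin ℓ → NonnegOn V ℓ → IsKSos V k ℓ} with hS
  have hSne : hVfin.toFinset.card ∈ S := by
    intro ℓ _ hnn
    have hind := fun (v : Fin d → ℝ) => exists_indicator V hVfin v
    choose δ hδdeg hδ1 hδ0 using hind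
    set F := hVfin.toFinset with hF
    refine ⟨F.card, fun i => C (Real.sqrt (eval ((F.equivFin.symm i : _) : Fin d → ℝ) ℓ)) *
      δ (F.equivFin.symm i : _), fun i => ?_, fun u hu => ?_⟩
    · refine (totalDegree_mul _ _).trans ?_
      simp only [totalDegree_C, zero_add]
      exact hδdeg _
    · have : ∀ i : Fin F.card,
          (eval u (C (Real.sqrt (eval ((F.equivFin.symm i : _) : Fin d → ℝ) ℓ)) *
            δ (F.equivFin.symm i : _))) ^ 2
          = eval ((F.equivFin.symm i : _) : Fin d → ℝ) ℓ * (eval u (δ (F.equivFin.symm i : _))) ^ 2 := by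
        intro i
        have hmem : ((F.equivFin.symm i : _) : Fin d → ℝ) ∈ V := by
          have := (F.equivFin.symm i).2
          exact hVfin.mem_toFinset.mp this
        rw [map_mul, eval_C, mul_pow, Real.sq_sqrt (hnn _ hmem)]
      rw [Finset.sum_congr rfl (fun i _ => this i)]
      rw [Equiv.sum_comp F.equivFin.symm
        (fun w => eval ((w : _) : Fin d → ℝ) ℓ * (eval u (δ (w : _))) ^ 2)]
      rw [Finset.sum_coe_sort F (fun w => eval w ℓ * (eval u (δ w)) ^ 2)]
      have huF : u ∈ F := hVfin.mem_toFinset.mpr hu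
      rw [Finset.sum_eq_single_of_mem u huF]
      · rw [hδ1 u, one_pow, mul_one]
      · intro w hwF hwu
        rw [hδ0 w u hu hwu.symm]
        ring
  have hmem : sInf S ∈ S := Nat.sInf_mem ⟨_, hSne⟩
  intro ℓ hdeg hnn
  obtain ⟨n, h, hdegs, heq⟩ := hmem ℓ hdeg hnn
  exact ⟨n, h, fun i => (hdegs i).trans hTh, heq⟩

/-- `b` is (a polynomial representing) a 0/1-valued affine function on `V`. -/
def Idem (V : Set (Fin d → ℝ)) (b : MP d) : Prop :=
  b.totalDegree ≤ 1 ∧ ∀ v ∈ V, eval v b = 0 ∨ eval v b = 1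

/-- `φ` agrees on `V` with a linear combination of 0/1-valued affine functions. -/
def Rep (V : Set (Fin d → ℝ)) (φ : MP d) : Prop :=
  ∃ (s : Finset (MP d)) (c : MP d → ℝ), (∀ b ∈ s, Idem V b) ∧
    ∀ v ∈ V, eval v φ = ∑ b ∈ s, c b * eval v b

lemma Rep_congr {V : Set (Fin d → ℝ)} {φ φ' : MP d}
    (h : ∀ v ∈ V, eval v φ = eval v φ') (h' : Rep V φ') : Rep V φ := by
  obtain ⟨s, c, hs, hval⟩ := h'
  exact ⟨s, c, hs, fun v hv => (h v hv).trans (hval v hv)⟩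

lemma Rep_idem {V : Set (Fin d → ℝ)} {b : MP d} (h : Idem V b) : Rep V b := by
  classical
  exact ⟨{b}, fun _ => 1, by simpa using h, fun v hv => by simp⟩

lemma Rep_smul {V : Set (Fin d → ℝ)} {φ : MP d} (a : ℝ) (h : Rep V φ) :
    Rep V (C a * φ) := by
  obtain ⟨s, c, hs, hval⟩ := h
  refine ⟨s, fun b => a * c b, hs, fun v hv => ?_⟩
  rw [map_mul, eval_C, hval v hv, Finset.mul_sum]
  exact Finset.sum_congr rfl fun b _ => by ring

lemma Rep_add {V : Set (Fin d → ℝ)} {φ φ' : MP d} (h : Rep V φ) (h' : Rep V φ') :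
    Rep V (φ + φ') := by
  classical
  obtain ⟨s₁, c₁, hs₁, hv₁⟩ := h
  obtain ⟨s₂, c₂, hs₂, hv₂⟩ := h'
  refine ⟨s₁ ∪ s₂, fun b => (if b ∈ s₁ then c₁ b else 0) + (if b ∈ s₂ then c₂ b else 0),
    fun b hb => ?_, fun v hv => ?_⟩
  · rcases Finset.mem_union.mp hb with h | h
    exacts [hs₁ b h, hs₂ b h]
  · rw [map_add, hv₁ v hv, hv₂ v hv]
    have : ∀ b ∈ s₁ ∪ s₂,
        ((if b ∈ s₁ then c₁ b else 0) + (if b ∈ s₂ then c₂ b else 0)) * eval v b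
        = (if b ∈ s₁ then c₁ b * eval v b else 0) + (if b ∈ s₂ then c₂ b * eval v b else 0) := by
      intro b _
      split_ifs <;> ring
    rw [Finset.sum_congr rfl this, Finset.sum_add_distrib,
      Finset.sum_ite_mem, Finset.sum_ite_mem,
      Finset.union_inter_cancel_left, Finset.union_inter_cancel_right]

section Geometry

variable {V : Set (Fin d → ℝ)} (hVfin : V.Finite)

/-- Hypothesis: there is no face strictly between the zero set of `ψ` and `V`. -/
def NoMid (V : Set (Fin d → ℝ)) (ψ : MP d) : Prop :=
  ¬ ∃ g : MP d, g.totalDegree ≤ 1 ∧ (∀ v ∈ V, 0 ≤ eval v g) ∧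
      (∀ v ∈ V, eval v ψ = 0 → eval v g = 0) ∧
      (∃ u ∈ V, eval u ψ ≠ 0 ∧ eval u g = 0) ∧ (∃ u' ∈ V, eval u' g ≠ 0)

/-- Lemma F: if there is no face strictly between `Z(ψ)` and `V`, then any affine-linear
polynomial vanishing on `Z(ψ)` is proportional to `ψ` on `V`. -/
lemma lemF (hVfin : V.Finite) (ψ : MP d) (hψd : ψ.totalDegree ≤ 1) (hψn : ∀ v ∈ V, 0 ≤ eval v ψ)
    (hmax : NoMid V ψ) (h : MP d) (hhd : h.totalDegree ≤ 1)
    (hh0 : ∀ v ∈ V, eval v ψ = 0 → eval v h = 0) :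
    ∃ lam : ℝ, ∀ v ∈ V, eval v h = lam * eval v ψ := by
  classical
  set U : Finset (Fin d → ℝ) := hVfin.toFinset.filter (fun v => eval v ψ ≠ 0) with hU
  have hUV : ∀ v ∈ U, v ∈ V ∧ eval v ψ ≠ 0 := by
    intro v hv
    have := Finset.mem_filter.mp hv
    exact ⟨hVfin.mem_toFinset.mp this.1, this.2⟩
  have hUmem : ∀ v ∈ V, eval v ψ ≠ 0 → v ∈ U := by
    intro v hv hne
    exact Finset.mem_filter.mpr ⟨hVfin.mem_toFinset.mpr hv, hne⟩
  have hψpos : ∀ v ∈ U, 0 < eval v ψ := fun v hv =>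
    lt_of_le_of_ne (hψn v (hUV v hv).1) (Ne.symm (hUV v hv).2)
  rcases U.eq_empty_or_nonempty with hUe | hUne
  · refine ⟨0, fun v hv => ?_⟩
    have hz : eval v ψ = 0 := by
      by_contra hne
      exact absurd (hUmem v hv hne) (by simp [hUe])
    rw [hh0 v hv hz, zero_mul]
  -- the key perturbation argument
  have key : ∀ h' : MP d, h'.totalDegree ≤ 1 → (∀ v ∈ V, eval v ψ = 0 → eval v h' = 0) →
      ∀ vm ∈ U, (∀ w ∈ U, eval w h' / eval w ψ ≤ eval vm h' / eval vm ψ) →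
      (∃ w ∈ U, eval w h' / eval w ψ ≠ eval vm h' / eval vm ψ) →
      0 < eval vm h' / eval vm ψ → False := by
    intro h' hd' hv' vm hvmU hub hne hρpos
    set ρ : ℝ := eval vm h' / eval vm ψ with hρ
    obtain ⟨w0, hw0U, hw0ne⟩ := hne
    have hval : ∀ v ∈ U, eval v h' = (eval v h' / eval v ψ) * eval v ψ := fun v hv =>
      (div_mul_cancel₀ _ (hUV v hv).2).symm
    set g : MP d := ψ - C ρ⁻¹ * h' with hg
    have hgval : ∀ v, eval v g = eval v ψ - ρ⁻¹ * eval v h' := by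
      intro v; simp [hg]
    have hgU : ∀ v ∈ U, eval v g = eval v ψ * (1 - ρ⁻¹ * (eval v h' / eval v ψ)) := by
      intro v hv
      rw [hgval v]
      nth_rewrite 1 [hval v hv]
      ring
    have hfac : ∀ v ∈ U, 0 ≤ 1 - ρ⁻¹ * (eval v h' / eval v ψ) := by
      intro v hv
      have h1 : ρ⁻¹ * (eval v h' / eval v ψ) ≤ ρ⁻¹ * ρ :=
        mul_le_mul_of_nonneg_left (hub v hv) (inv_nonneg.mpr hρpos.le)
      rw [inv_mul_cancel₀ (ne_of_gt hρpos)] at h1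
      linarith
    refine hmax ⟨g, ?_, ?_, ?_, ⟨vm, (hUV vm hvmU).1, (hUV vm hvmU).2, ?_⟩,
      ⟨w0, (hUV w0 hw0U).1, ?_⟩⟩
    · refine (totalDegree_sub _ _).trans (max_le hψd ?_)
      exact (totalDegree_mul _ _).trans (by simpa using hd')
    · intro v hv
      by_cases hz : eval v ψ = 0
      · rw [hgval v, hz, hv' v hv hz]; simp
      · have hvU := hUmem v hv hz
        rw [hgU v hvU]
        exact mul_nonneg (hψn v hv) (hfac v hvU)
    · intro v hv hz
      rw [hgval v, hz, hv' v hv hz]; simp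
    · rw [hgU vm hvmU, ← hρ, inv_mul_cancel₀ (ne_of_gt hρpos)]
      simp
    · rw [hgU w0 hw0U]
      refine ne_of_gt (mul_pos (hψpos w0 hw0U) ?_)
      have hlt : eval w0 h' / eval w0 ψ < ρ := lt_of_le_of_ne (hub w0 hw0U) hw0ne
      have h2 : ρ⁻¹ * (eval w0 h' / eval w0 ψ) < ρ⁻¹ * ρ :=
        mul_lt_mul_of_pos_left hlt (inv_pos.mpr hρpos)
      rw [inv_mul_cancel₀ (ne_of_gt hρpos)] at h2
      linarith
  -- main case analysis
  obtain ⟨vm, hvmU, hub⟩ := U.exists_max_image (fun v => eval v h / eval v ψ) hUne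
  by_cases hconst : ∀ w ∈ U, eval w h / eval w ψ = eval vm h / eval vm ψ
  · refine ⟨eval vm h / eval vm ψ, fun v hv => ?_⟩
    by_cases hz : eval v ψ = 0
    · rw [hh0 v hv hz, hz, mul_zero]
    · have hvU := hUmem v hv hz
      rw [← hconst v hvU, div_mul_cancel₀ _ (hUV v hvU).2]
  · push_neg at hconst
    obtain ⟨w0, hw0U, hw0ne⟩ := hconst
    by_cases hsign : 0 < eval vm h / eval vm ψ
    · exact (key h hhd hh0 vm hvmU hub ⟨w0, hw0U, hw0ne⟩ hsign).elim
    · push_neg at hsign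
      obtain ⟨vm', hvm'U, hub'⟩ := U.exists_max_image (fun v => eval v (-h) / eval v ψ) hUne
      have hneg : ∀ v, eval v (-h) / eval v ψ = -(eval v h / eval v ψ) := by
        intro v; rw [map_neg, neg_div]
      have hw0lt : eval w0 h / eval w0 ψ < eval vm h / eval vm ψ :=
        lt_of_le_of_ne (hub w0 hw0U) hw0ne
      have hpos' : 0 < eval vm' (-h) / eval vm' ψ := by
        have h1 : eval w0 (-h) / eval w0 ψ ≤ eval vm' (-h) / eval vm' ψ := hub' w0 hw0U
        rw [hneg w0] at h1
        linarith
      have hne' : ∃ w ∈ U, eval w (-h) / eval w ψ ≠ eval vm' (-h) / eval vm' ψ := by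
        refine ⟨vm, hvmU, ?_⟩
        rw [hneg vm]
        have h1 := hub' w0 hw0U
        rw [hneg w0] at h1
        exact ne_of_lt (by linarith)
      exact (key (-h) (by rwa [totalDegree_neg])
        (fun v hv hz => by rw [map_neg, hh0 v hv hz, neg_zero])
        vm' hvm'U hub' hne' hpos').elim

/-- From a degree-1 sos certificate and Lemma F, a "facet" gives a 0/1-valued
affine function cutting it out. -/
lemma exists_idem (hVfin : V.Finite)
    (H1 : ∀ ℓ : MP d, ℓ.totalDegree ≤ 1 → (∀ v ∈ V, 0 ≤ eval v ℓ) →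
      ∃ (n : ℕ) (h : Fin n → MP d), (∀ i, (h i).totalDegree ≤ 1) ∧
        ∀ v ∈ V, eval v ℓ = ∑ i, (eval v (h i)) ^ 2)
    (ψ : MP d) (hψd : ψ.totalDegree ≤ 1) (hψn : ∀ v ∈ V, 0 ≤ eval v ψ)
    (hmax : NoMid V ψ) (u : Fin d → ℝ) (hu : u ∈ V) (hune : eval u ψ ≠ 0) :
    ∃ (b : MP d) (c : ℝ), Idem V b ∧ 0 < c ∧ ∀ v ∈ V, eval v ψ = c⁻¹ * eval v b := by
  classical
  obtain ⟨n, s, hsd, hs⟩ := H1 ψ hψd hψn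
  have hvanish : ∀ k, ∀ v ∈ V, eval v ψ = 0 → eval v (s k) = 0 := by
    intro k v hv hz
    have h0 : ∑ i, (eval v (s i)) ^ 2 = 0 := by rw [← hs v hv, hz]
    have := (Finset.sum_eq_zero_iff_of_nonneg (fun i _ => sq_nonneg (eval v (s i)))).mp h0
    exact (pow_eq_zero_iff two_ne_zero).mp (this k (Finset.mem_univ k))
  have hlam := fun k => lemF hVfin ψ hψd hψn hmax (s k) (hsd k) (hvanish k)
  choose lam hlam using hlam
  set c : ℝ := ∑ k, (lam k) ^ 2 with hc
  have hkey : ∀ v ∈ V, eval v ψ = c * (eval v ψ) ^ 2 := by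
    intro v hv
    calc eval v ψ = ∑ i, (eval v (s i)) ^ 2 := hs v hv
      _ = ∑ k, (lam k * eval v ψ) ^ 2 :=
          Finset.sum_congr rfl fun k _ => by rw [hlam k v hv]
      _ = (∑ k, (lam k) ^ 2) * (eval v ψ) ^ 2 := by
          rw [Finset.sum_mul]
          exact Finset.sum_congr rfl fun k _ => by ring
      _ = c * (eval v ψ) ^ 2 := by rw [hc]
  have hcpos : 0 < c := by
    have hcnn : 0 ≤ c := Finset.sum_nonneg fun k _ => sq_nonneg _
    rcases hcnn.lt_or_eq with h | h
    · exact h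
    · exfalso
      apply hune
      have := hkey u hu
      rw [← h, zero_mul] at this
      exact this
  refine ⟨C c * ψ, c, ⟨?_, ?_⟩, hcpos, ?_⟩
  · exact (totalDegree_mul _ _).trans (by simpa using hψd)
  · intro v hv
    have hx : eval v (C c * ψ) = c * eval v ψ := by simp
    have h2 := hkey v hv
    have hsq : (c * eval v ψ) * ((c * eval v ψ) - 1) = 0 := by linear_combination (-c) * h2
    rcases mul_eq_zero.mp hsq with h | h
    · left; rw [hx, h]
    · right; rw [hx]; linarith [sub_eq_zero.mp h]
  · intro v hv
    rw [map_mul, eval_C, inv_mul_cancel_left₀ (ne_of_gt hcpos)]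

/-- Every affine-linear polynomial nonnegative on `V` agrees on `V` with a linear
combination of 0/1-valued affine functions (the "span" lemma). -/
lemma rep_of_nonneg (hVfin : V.Finite)
    (H1 : ∀ ℓ : MP d, ℓ.totalDegree ≤ 1 → (∀ v ∈ V, 0 ≤ eval v ℓ) →
      ∃ (n : ℕ) (h : Fin n → MP d), (∀ i, (h i).totalDegree ≤ 1) ∧
        ∀ v ∈ V, eval v ℓ = ∑ i, (eval v (h i)) ^ 2) :
    ∀ ψ : MP d, ψ.totalDegree ≤ 1 → (∀ v ∈ V, 0 ≤ eval v ψ) → Rep V ψ := by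
  classical
  suffices key : ∀ (n : ℕ) (ψ : MP d), ψ.totalDegree ≤ 1 → (∀ v ∈ V, 0 ≤ eval v ψ) →
      (hVfin.toFinset.filter (fun v => eval v ψ ≠ 0)).card ≤ n → Rep V ψ by
    intro ψ h1 h2
    exact key _ ψ h1 h2 le_rfl
  intro n
  induction n with
  | zero =>
    intro ψ hψd hψn hcard
    have hall : ∀ v ∈ V, eval v ψ = 0 := by
      intro v hv
      by_contra hne
      have hmem : v ∈ hVfin.toFinset.filter (fun v => eval v ψ ≠ 0) :=
        Finset.mem_filter.mpr ⟨hVfin.mem_toFinset.mpr hv, hne⟩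
      have := Finset.card_pos.mpr ⟨v, hmem⟩
      omega
    exact ⟨∅, fun _ => 0, by simp, fun v hv => by simp [hall v hv]⟩
  | succ n IH =>
    intro ψ hψd hψn hcard
    set U : Finset (Fin d → ℝ) := hVfin.toFinset.filter (fun v => eval v ψ ≠ 0) with hU
    by_cases hsmall : U.card ≤ n
    · exact IH ψ hψd hψn hsmall
    have hUne : U.Nonempty := Finset.card_pos.mp (by omega)
    have hUV : ∀ v ∈ U, v ∈ V ∧ eval v ψ ≠ 0 := by
      intro v hv
      have := Finset.mem_filter.mp hv
      exact ⟨hVfin.mem_toFinset.mp this.1, this.2⟩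
    have hUmem : ∀ v ∈ V, eval v ψ ≠ 0 → v ∈ U := fun v hv hne =>
      Finset.mem_filter.mpr ⟨hVfin.mem_toFinset.mpr hv, hne⟩
    have hψpos : ∀ v ∈ U, 0 < eval v ψ := fun v hv =>
      lt_of_le_of_ne (hψn v (hUV v hv).1) (Ne.symm (hUV v hv).2)
    by_cases hmid : ∃ g : MP d, g.totalDegree ≤ 1 ∧ (∀ v ∈ V, 0 ≤ eval v g) ∧
        (∀ v ∈ V, eval v ψ = 0 → eval v g = 0) ∧
        (∃ u ∈ V, eval u ψ ≠ 0 ∧ eval u g = 0) ∧ (∃ u' ∈ V, eval u' g ≠ 0)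
    · obtain ⟨g, hgd, hgn, hg0, ⟨u, huV, huψ, hug⟩, u', hu'V, hu'g⟩ := hmid
      -- `g` vanishes at one more point of `U`, so induction applies to it
      have hgU : hVfin.toFinset.filter (fun v => eval v g ≠ 0) ⊆ U.erase u := by
        intro v hv
        have hv' := Finset.mem_filter.mp hv
        have hvV := hVfin.mem_toFinset.mp hv'.1
        have hvψ : eval v ψ ≠ 0 := fun hz => hv'.2 (hg0 v hvV hz)
        refine Finset.mem_erase.mpr ⟨?_, hUmem v hvV hvψ⟩
        rintro rfl
        exact hv'.2 hug
      have hgcard : (hVfin.toFinset.filter (fun v => eval v g ≠ 0)).card ≤ n := by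
        have h1 := Finset.card_le_card hgU
        have h2 : (U.erase u).card = U.card - 1 :=
          Finset.card_erase_of_mem (hUmem u huV huψ)
        omega
      have hRg : Rep V g := IH g hgd hgn hgcard
      -- subtract the maximal multiple of `g` from `ψ`
      obtain ⟨vm, hvmU, hub⟩ := U.exists_max_image (fun v => eval v g / eval v ψ) hUne
      set ρ : ℝ := eval vm g / eval vm ψ with hρ
      have hρpos : 0 < ρ := by
        have hu'U : u' ∈ U := hUmem u' hu'V (fun hz => hu'g (hg0 u' hu'V hz))
        have h1 : 0 < eval u' g / eval u' ψ :=
          div_pos (lt_of_le_of_ne (hgn u' hu'V) (Ne.symm hu'g)) (hψpos u' hu'U)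
        exact lt_of_lt_of_le h1 (hub u' hu'U)
      set ψ' : MP d := ψ - C ρ⁻¹ * g with hψ'
      have hψ'val : ∀ v, eval v ψ' = eval v ψ - ρ⁻¹ * eval v g := by
        intro v; simp [hψ']
      have hψ'U : ∀ v ∈ U, eval v ψ' = eval v ψ * (1 - ρ⁻¹ * (eval v g / eval v ψ)) := by
        intro v hv
        rw [hψ'val v]
        have : eval v g = (eval v g / eval v ψ) * eval v ψ := (div_mul_cancel₀ _ (hUV v hv).2).symm
        nth_rewrite 1 [this]
        ring
      have hψ'd : ψ'.totalDegree ≤ 1 := by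
        refine (totalDegree_sub _ _).trans (max_le hψd ?_)
        exact (totalDegree_mul _ _).trans (by simpa using hgd)
      have hψ'n : ∀ v ∈ V, 0 ≤ eval v ψ' := by
        intro v hv
        by_cases hz : eval v ψ = 0
        · rw [hψ'val v, hz, hg0 v hv hz]; simp
        · have hvU := hUmem v hv hz
          rw [hψ'U v hvU]
          refine mul_nonneg (hψn v hv) ?_
          have h1 : ρ⁻¹ * (eval v g / eval v ψ) ≤ ρ⁻¹ * ρ :=
            mul_le_mul_of_nonneg_left (hub v hvU) (inv_nonneg.mpr hρpos.le)
          rw [inv_mul_cancel₀ (ne_of_gt hρpos)] at h1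
          linarith
      have hψ'card : (hVfin.toFinset.filter (fun v => eval v ψ' ≠ 0)).card ≤ n := by
        have hsub : hVfin.toFinset.filter (fun v => eval v ψ' ≠ 0) ⊆ U.erase vm := by
          intro v hv
          have hv' := Finset.mem_filter.mp hv
          have hvV := hVfin.mem_toFinset.mp hv'.1
          have hvψ : eval v ψ ≠ 0 := by
            intro hz
            exact hv'.2 (by rw [hψ'val v, hz, hg0 v hvV hz]; ring)
          refine Finset.mem_erase.mpr ⟨?_, hUmem v hvV hvψ⟩
          rintro rfl
          apply hv'.2
          rw [hψ'U v (hUmem v hvV hvψ), ← hρ, inv_mul_cancel₀ (ne_of_gt hρpos)]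
          ring
        have h1 := Finset.card_le_card hsub
        have h2 : (U.erase vm).card = U.card - 1 := Finset.card_erase_of_mem hvmU
        omega
      have hRψ' : Rep V ψ' := IH ψ' hψ'd hψ'n hψ'card
      refine Rep_congr (fun v hv => ?_) (Rep_add hRψ' (Rep_smul ρ⁻¹ hRg))
      rw [map_add, hψ'val v]
      simp
    · -- no intermediate face: `ψ` cuts a maximal face, idempotent construction
      obtain ⟨u, huU⟩ := hUne
      obtain ⟨b, c, hIdem, hcpos, heq⟩ :=
        exists_idem hVfin H1 ψ hψd hψn hmid u (hUV u huU).1 (hUV u huU).2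
      refine ⟨{b}, fun _ => c⁻¹, by simpa using hIdem, fun v hv => ?_⟩
      rw [heq v hv]
      simp

end Geometry

section Affine

lemma affine_support {p : MP d} (hp : p.totalDegree ≤ 1) {m : (Fin d) →₀ ℕ}
    (hm : m ∈ p.support) : m = 0 ∨ ∃ j, m = Finsupp.single j 1 := by
  classical
  have hdeg : (m.sum fun _ e => e) ≤ 1 := le_trans (le_totalDegree hm) hp
  by_cases h0 : m = 0
  · exact Or.inl h0
  · right
    obtain ⟨j, hj⟩ := Finsupp.support_nonempty_iff.mpr h0
    have hj1 : 1 ≤ m j := Nat.one_le_iff_ne_zero.mpr (Finsupp.mem_support_iff.mp hj)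
    have hsum : ∑ i ∈ m.support, m i ≤ 1 := hdeg
    have hmj : m j = 1 := by
      have h3 : m j ≤ ∑ i ∈ m.support, m i :=
        Finset.single_le_sum (f := fun i => m i) (fun i _ => Nat.zero_le _) hj
      omega
    have hsupp : m.support = {j} := by
      refine Finset.eq_singleton_iff_unique_mem.mpr ⟨hj, fun i hi => ?_⟩
      by_contra hne
      have hsub : {i, j} ⊆ m.support := by
        intro x hx
        rcases Finset.mem_insert.mp hx with rfl | hx
        · exact hi
        · rw [Finset.mem_singleton.mp hx]; exact hj
      have h2 : ∑ x ∈ ({i, j} : Finset (Fin d)), m x ≤ ∑ x ∈ m.support, m x :=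
        Finset.sum_le_sum_of_subset hsub
      rw [Finset.sum_pair hne] at h2
      have hi1 : 1 ≤ m i := Nat.one_le_iff_ne_zero.mpr (Finsupp.mem_support_iff.mp hi)
      omega
    refine ⟨j, ?_⟩
    have := (Finsupp.support_eq_singleton.mp hsupp).2
    rwa [hmj] at this

lemma affine_decomp {p : MP d} (hp : p.totalDegree ≤ 1) :
    p = C (p.coeff 0) + ∑ j, C (p.coeff (Finsupp.single j 1)) * X j := by
  classical
  apply MvPolynomial.ext
  intro m
  rw [coeff_add, coeff_C, coeff_sum]
  simp only [coeff_C_mul, coeff_X']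
  by_cases h0 : m = 0
  · subst h0
    rw [if_pos rfl]
    have hz : ∀ j : Fin d, j ∈ Finset.univ →
        p.coeff (Finsupp.single j 1) * (if Finsupp.single j 1 = 0 then 1 else 0) = 0 := by
      intro j _
      rw [if_neg (by simp), mul_zero]
    rw [Finset.sum_congr rfl hz, Finset.sum_const_zero, add_zero]
  · rw [if_neg (fun h => h0 h.symm), zero_add]
    by_cases h1 : ∃ j, m = Finsupp.single j 1
    · obtain ⟨j0, rfl⟩ := h1
      rw [Finset.sum_eq_single j0]
      · rw [if_pos rfl, mul_one]
      · intro j _ hne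
        rw [if_neg, mul_zero]
        intro heq
        exact hne ((Finsupp.single_left_inj one_ne_zero).mp heq)
      · intro h; exact absurd (Finset.mem_univ j0) h
    · have hns : m ∉ p.support := by
        intro hmem
        rcases affine_support hp hmem with h | h
        exacts [h0 h, h1 h]
      rw [MvPolynomial.notMem_support_iff.mp hns]
      symm
      refine Finset.sum_eq_zero fun j _ => ?_
      rw [if_neg (fun h => h1 ⟨j, h.symm⟩), mul_zero]

lemma eval_affine {p : MP d} (hp : p.totalDegree ≤ 1) (x : Fin d → ℝ) :
    eval x p = p.coeff 0 + ∑ j, p.coeff (Finsupp.single j 1) * x j := by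
  conv_lhs => rw [affine_decomp hp]
  simp

end Affine

section Main

set_option maxHeartbeats 2000000 in
lemma main_incl (V : Set (Fin d → ℝ)) (hVfin : V.Finite) (hVne : V.Nonempty)
    (H1 : ∀ ℓ : MP d, ℓ.totalDegree ≤ 1 → (∀ v ∈ V, 0 ≤ eval v ℓ) →
      ∃ (n : ℕ) (h : Fin n → MP d), (∀ i, (h i).totalDegree ≤ 1) ∧
        ∀ v ∈ V, eval v ℓ = ∑ i, (eval v (h i)) ^ 2) :
    (MvPolynomial.vanishingIdeal ℝ V : Ideal (MP d)) ≤
      Ideal.span {q : MP d | q.totalDegree ≤ 2 ∧ ∀ v ∈ V, eval v q = 0} := by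
  classical
  set G : Set (MP d) := {q : MP d | q.totalDegree ≤ 2 ∧ ∀ v ∈ V, eval v q = 0} with hGdef
  set J : Ideal (MP d) := Ideal.span G with hJdef
  have hπ0' : ∀ q : MP d, q.totalDegree ≤ 2 → (∀ v ∈ V, eval v q = 0) →
      Ideal.Quotient.mk J q = 0 := by
    intro q h1 h2
    exact Ideal.Quotient.eq_zero_iff_mem.mpr (Ideal.subset_span ⟨h1, h2⟩)
  clear_value J
  set π := Ideal.Quotient.mk J with hπdef
  have hπ0 : ∀ q : MP d, q.totalDegree ≤ 2 → (∀ v ∈ V, eval v q = 0) → π q = 0 := hπ0'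
  -- the family of 0/1-valued affine polynomials
  have himg : ∀ j : Fin d, (hVfin.toFinset.image (fun v => v j)).Nonempty :=
    fun j => (Finset.image_nonempty).mpr (hVfin.toFinset_nonempty.mpr hVne)
  set mcoord : Fin d → ℝ := fun j => (hVfin.toFinset.image (fun v => v j)).min' (himg j)
    with hmdef
  have hψrep : ∀ j : Fin d, Rep V (X j - C (mcoord j)) := by
    intro j
    refine rep_of_nonneg hVfin H1 _ ?_ ?_
    · refine (totalDegree_sub _ _).trans (max_le ?_ ?_)
      · exact le_of_eq (totalDegree_X j)
      · simp
    · intro v hv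
      have h1 : mcoord j ≤ v j :=
        Finset.min'_le _ _ (Finset.mem_image_of_mem _ (hVfin.mem_toFinset.mpr hv))
      have h2 : eval v (X j - C (mcoord j)) = v j - mcoord j := by simp
      rw [h2]
      linarith
  choose sfam γ hIdem hval using hψrep
  set B : Finset (MP d) := insert 1 (Finset.univ.biUnion sfam) with hBdef
  have hBIdem : ∀ b ∈ B, Idem V b := by
    intro b hb
    rcases Finset.mem_insert.mp hb with rfl | hb
    · exact ⟨by simp [totalDegree_one], fun v hv => Or.inr (by simp)⟩
    · obtain ⟨j, _, hj⟩ := Finset.mem_biUnion.mp hb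
      exact hIdem j b hj
  have h1B : (1 : MP d) ∈ B := Finset.mem_insert_self _ _
  have hsub : ∀ j : Fin d, sfam j ⊆ B := fun j b hb =>
    Finset.mem_insert_of_mem (Finset.mem_biUnion.mpr ⟨j, Finset.mem_univ j, hb⟩)
  -- coefficients expressing the coordinate functions over `B`
  set c : Fin d → MP d → ℝ := fun j b =>
    (if b = 1 then mcoord j else 0) + (if b ∈ sfam j then γ j b else 0) with hcdef
  have hXrep : ∀ (j : Fin d), ∀ v ∈ V, v j = ∑ b ∈ B, c j b * eval v b := by
    intro j v hv
    have h1 : eval v (X j - C (mcoord j)) = ∑ b ∈ sfam j, γ j b * eval v b := hval j v hv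
    have h2 : v j = mcoord j + ∑ b ∈ sfam j, γ j b * eval v b := by
      have h3 : eval v (X j - C (mcoord j)) = v j - mcoord j := by simp
      rw [h3] at h1; linarith
    rw [h2]
    have hsplit : ∀ b ∈ B, c j b * eval v b
        = (if b = 1 then mcoord j * eval v b else 0)
          + (if b ∈ sfam j then γ j b * eval v b else 0) := by
      intro b _
      simp only [hcdef]
      split_ifs <;> ring
    rw [Finset.sum_congr rfl hsplit, Finset.sum_add_distrib]
    congr 1
    · rw [Finset.sum_ite_eq' B (1 : MP d) (fun b => mcoord j * eval v b), if_pos h1B]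
      simp
    · rw [Finset.sum_ite_mem, Finset.inter_eq_right.mpr (hsub j)]
  -- every affine-linear polynomial is a combination of `B` on `V`
  have master : ∀ s' : MP d, s'.totalDegree ≤ 1 →
      ∃ cc : MP d → ℝ, ∀ v ∈ V, eval v s' = ∑ b ∈ B, cc b * eval v b := by
    intro s' hs'
    refine ⟨fun b => (if b = 1 then s'.coeff 0 else 0)
      + ∑ j, s'.coeff (Finsupp.single j 1) * c j b, fun v hv => ?_⟩
    rw [eval_affine hs' v]
    have hsplit : ∀ b ∈ B,
        ((if b = 1 then s'.coeff 0 else 0) + ∑ j, s'.coeff (Finsupp.single j 1) * c j b)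
          * eval v b
        = (if b = 1 then s'.coeff 0 * eval v b else 0)
          + ∑ j, s'.coeff (Finsupp.single j 1) * (c j b * eval v b) := by
      intro b _
      rw [add_mul, Finset.sum_mul]
      congr 1
      · split_ifs <;> ring
      · exact Finset.sum_congr rfl fun j _ => by ring
    rw [Finset.sum_congr rfl hsplit, Finset.sum_add_distrib]
    congr 1
    · rw [Finset.sum_ite_eq' B (1 : MP d) (fun b => s'.coeff 0 * eval v b), if_pos h1B]
      simp
    · rw [Finset.sum_comm]
      refine Finset.sum_congr rfl fun j _ => ?_
      rw [← Finset.mul_sum, ← hXrep j v hv]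
  -- ### the idempotent products e_T ###
  set e : Finset (MP d) → MP d := fun T => (∏ b ∈ T, b) * ∏ b ∈ B \ T, (1 - b) with hedef
  have hsum1 : ∑ T ∈ B.powerset, e T = 1 := by
    have h := Finset.prod_add (fun b : MP d => b) (fun b => 1 - b) B
    have h2 : ∏ b ∈ B, (b + (1 - b)) = 1 := by
      rw [Finset.prod_congr rfl (fun b _ => by ring : ∀ b ∈ B, b + (1 - b) = 1)]
      exact Finset.prod_const_one
    rw [h2] at h
    simp only [hedef]
    exact h.symm
  have hmulT : ∀ T ∈ B.powerset, ∀ b ∈ B, π (b * e T) = if b ∈ T then π (e T) else 0 := by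
    intro T hT b hb
    have hbb : π (b * b) = π b := by
      have hq : π (b * b - b) = 0 := by
        refine hπ0 _ ?_ ?_
        · refine (totalDegree_sub _ _).trans (max_le ((totalDegree_mul _ _).trans ?_) ?_)
          · have := (hBIdem b hb).1; omega
          · exact (hBIdem b hb).1.trans one_le_two
        · intro v hv
          rcases (hBIdem b hb).2 v hv with h | h <;> simp [h]
      rw [map_sub] at hq
      exact sub_eq_zero.mp hq
    by_cases hbT : b ∈ T
    · rw [if_pos hbT]
      have hfac : e T = b * ((∏ b' ∈ T.erase b, b') * ∏ b' ∈ B \ T, (1 - b')) := by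
        simp only [hedef]
        rw [← Finset.mul_prod_erase T _ hbT]
        ring
      have h2 : b * e T = (b * b) * ((∏ b' ∈ T.erase b, b') * ∏ b' ∈ B \ T, (1 - b')) := by
        rw [hfac]; ring
      rw [h2, map_mul, hbb, ← map_mul, ← hfac]
    · rw [if_neg hbT]
      have hbBT : b ∈ B \ T := Finset.mem_sdiff.mpr ⟨hb, hbT⟩
      have hfac : e T = (1 - b) * ((∏ b' ∈ T, b') * ∏ b' ∈ (B \ T).erase b, (1 - b')) := by
        simp only [hedef]
        rw [← Finset.mul_prod_erase (B \ T) _ hbBT]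
        ring
      have h2 : b * e T = (b * (1 - b)) * ((∏ b' ∈ T, b') * ∏ b' ∈ (B \ T).erase b, (1 - b')) := by
        rw [hfac]; ring
      have h3 : π (b * (1 - b)) = 0 := by
        have h4 : b * (1 - b) = b - b * b := by ring
        rw [h4, map_sub, hbb, sub_self]
      rw [h2, map_mul, h3, zero_mul]
  clear_value e
  -- ### multiplication by an affine-linear polynomial acts as a scalar on e_T ###
  have hkey : ∀ T ∈ B.powerset, ∀ (s' : MP d) (cc : MP d → ℝ), s'.totalDegree ≤ 1 →
      (∀ v ∈ V, eval v s' = ∑ b ∈ B, cc b * eval v b) →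
      π (s' * e T) = π (C (∑ b ∈ T, cc b)) * π (e T) := by
    intro T hT s' cc hs' hcc
    have hTB : T ⊆ B := Finset.mem_powerset.mp hT
    have hq : π (s' - ∑ b ∈ B, C (cc b) * b) = 0 := by
      refine hπ0 _ ?_ ?_
      · refine (totalDegree_sub _ _).trans
          (max_le (hs'.trans one_le_two) ((totalDegree_finset_sum _ _).trans ?_))
        refine Finset.sup_le fun b hb => ?_
        refine (totalDegree_mul _ _).trans ?_
        have := (hBIdem b hb).1
        simp only [totalDegree_C]
        omega
      · intro v hv
        rw [map_sub, hcc v hv, map_sum, sub_eq_zero]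
        exact Finset.sum_congr rfl fun b _ => by simp
    have hs'e : π s' = π (∑ b ∈ B, C (cc b) * b) := by
      rw [← sub_eq_zero, ← map_sub]
      exact hq
    calc π (s' * e T) = π s' * π (e T) := map_mul _ _ _
      _ = π (∑ b ∈ B, C (cc b) * b) * π (e T) := by rw [hs'e]
      _ = ∑ b ∈ B, π (C (cc b) * b) * π (e T) := by rw [map_sum, Finset.sum_mul]
      _ = ∑ b ∈ B, (if b ∈ T then π (C (cc b)) * π (e T) else 0) := by
          refine Finset.sum_congr rfl fun b hb => ?_
          rw [map_mul, mul_assoc, ← map_mul π b (e T), hmulT T hT b hb]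
          split_ifs <;> simp
      _ = ∑ b ∈ T, π (C (cc b)) * π (e T) := by
          rw [Finset.sum_ite_mem, Finset.inter_eq_right.mpr hTB]
      _ = (∑ b ∈ T, π (C (cc b))) * π (e T) := by rw [Finset.sum_mul]
      _ = π (C (∑ b ∈ T, cc b)) * π (e T) := by rw [map_sum, map_sum]
  -- the candidate points
  set w : Finset (MP d) → (Fin d → ℝ) := fun T j => ∑ b ∈ T, c j b with hwdef
  have hXT : ∀ T ∈ B.powerset, ∀ j : Fin d, π (X j * e T) = π (C (w T j)) * π (e T) := by
    intro T hT j
    refine hkey T hT (X j) (c j) (le_of_eq (totalDegree_X j)) fun v hv => ?_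
    rw [eval_X]
    exact hXrep j v hv
  -- ### multiplication by an arbitrary polynomial acts as evaluation at w_T on e_T ###
  have hfull : ∀ T ∈ B.powerset, ∀ f : MP d,
      π (f * e T) = π (C (eval (w T) f)) * π (e T) := by
    intro T hT f
    induction f using MvPolynomial.induction_on with
    | C a => rw [eval_C, map_mul]
    | add p q hp hq =>
        calc π ((p + q) * e T) = π (p * e T) + π (q * e T) := by rw [add_mul, map_add]
          _ = π (C (eval (w T) p)) * π (e T) + π (C (eval (w T) q)) * π (e T) := by rw [hp, hq]
          _ = π (C (eval (w T) (p + q))) * π (e T) := by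
              rw [map_add (eval (w T)), map_add C, map_add π, add_mul]
    | mul_X p j hp =>
        have h1 : (p * X j) * e T = p * (X j * e T) := by ring
        calc π ((p * X j) * e T) = π p * π (X j * e T) := by rw [h1, map_mul]
          _ = π p * (π (C (w T j)) * π (e T)) := by rw [hXT T hT j]
          _ = π (C (w T j)) * (π p * π (e T)) := by ring
          _ = π (C (w T j)) * π (p * e T) := by rw [map_mul]
          _ = π (C (w T j)) * (π (C (eval (w T) p)) * π (e T)) := by rw [hp]
          _ = π (C (w T j)) * π (C (eval (w T) p)) * π (e T) := by ring
          _ = π (C (eval (w T) (p * X j))) * π (e T) := by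
              have hC2 : (C (eval (w T) (p * X j)) : MP d)
                  = C (w T j) * C (eval (w T) p) := by
                rw [map_mul (eval (w T)), eval_X, ← map_mul]
                ring_nf
              rw [hC2, map_mul]
  -- ### each pattern either comes from a point of V or is killed ###
  intro f hf
  have hfval : ∀ v ∈ V, eval v f = 0 := fun v hv => mem_vanishingIdeal_iff.mp hf v hv
  have hterm : ∀ T ∈ B.powerset, π (f * e T) = 0 := by
    intro T hT
    have hTB : T ⊆ B := Finset.mem_powerset.mp hT
    by_cases hreal : ∃ v ∈ V, ∀ b ∈ B, eval v b = if b ∈ T then 1 else 0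
    · -- realized pattern: w_T is a point of V
      obtain ⟨v, hvV, hvpat⟩ := hreal
      have hwv : w T = v := by
        funext j
        have h1 := hXrep j v hvV
        rw [Finset.sum_congr rfl (fun b hb => by rw [hvpat b hb])] at h1
        have h2 : ∀ b ∈ B, c j b * (if b ∈ T then (1 : ℝ) else 0)
            = if b ∈ T then c j b else 0 := by
          intro b _
          split_ifs <;> ring
        rw [Finset.sum_congr rfl h2, Finset.sum_ite_mem, Finset.inter_eq_right.mpr hTB] at h1
        simp only [hwdef]
        exact h1.symm
      rw [hfull T hT f, hwv, hfval v hvV, map_zero, map_zero, zero_mul]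
    · -- unrealized pattern: e_T dies in the quotient
      have heT0 : π (e T) = 0 := by
        push_neg at hreal
        set g : MP d := ∑ b ∈ B, (if b ∈ T then 1 - b else b) with hgdef
        have hgd : g.totalDegree ≤ 1 := by
          refine (totalDegree_finset_sum _ _).trans (Finset.sup_le fun b hb => ?_)
          split_ifs
          · exact (totalDegree_sub _ _).trans (by simp [(hBIdem b hb).1])
          · exact (hBIdem b hb).1
        have hg1 : ∀ v ∈ V, 1 ≤ eval v g := by
          intro v hv
          obtain ⟨b₀, hb₀B, hb₀⟩ := hreal v hv
          have hterm1 : eval v (if b₀ ∈ T then 1 - b₀ else b₀) = 1 := by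
            by_cases h : b₀ ∈ T
            · rw [if_pos h] at hb₀ ⊢
              rcases (hBIdem b₀ hb₀B).2 v hv with hx | hx
              · rw [map_sub, hx]; simp
              · exact absurd hx hb₀
            · rw [if_neg h] at hb₀ ⊢
              rcases (hBIdem b₀ hb₀B).2 v hv with hx | hx
              exacts [absurd hx hb₀, hx]
          have hnn : ∀ b ∈ B, 0 ≤ eval v (if b ∈ T then 1 - b else b) := by
            intro b hb
            rcases (hBIdem b hb).2 v hv with hx | hx <;> split_ifs <;>
              simp [map_sub, hx]
          have hle : eval v (if b₀ ∈ T then 1 - b₀ else b₀)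
              ≤ ∑ b ∈ B, eval v (if b ∈ T then 1 - b else b) :=
            Finset.single_le_sum hnn hb₀B
          rw [hterm1] at hle
          simpa only [hgdef, map_sum] using hle
        have hgm1d : (g - 1).totalDegree ≤ 1 := by
          refine (totalDegree_sub _ _).trans (max_le hgd (by simp))
        obtain ⟨N, sk, hskd, hskeq⟩ := H1 (g - 1) hgm1d (fun v hv => by
          rw [map_sub, map_one]
          linarith [hg1 v hv])
        have hge : π (g * e T) = 0 := by
          have h1 : g * e T = ∑ b ∈ B, (if b ∈ T then 1 - b else b) * e T := by
            rw [hgdef, Finset.sum_mul]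
          rw [h1, map_sum]
          refine Finset.sum_eq_zero fun b hb => ?_
          by_cases h : b ∈ T
          · rw [if_pos h]
            have h2 : (1 - b) * e T = e T - b * e T := by ring
            rw [h2, map_sub, hmulT T hT b hb, if_pos h, sub_self]
          · rw [if_neg h, hmulT T hT b hb, if_neg h]
        clear_value g
        have hq : π ((g - 1 - ∑ k, (sk k) ^ 2) * e T) = 0 := by
          rw [map_mul]
          have h0 : π (g - 1 - ∑ k, (sk k) ^ 2) = 0 := by
            refine hπ0 _ ?_ ?_
            · refine (totalDegree_sub _ _).trans
                (max_le (hgm1d.trans one_le_two) ((totalDegree_finset_sum _ _).trans ?_))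
              refine Finset.sup_le fun k _ => (totalDegree_pow _ _).trans ?_
              have := hskd k
              omega
            · intro v hv
              rw [map_sub, hskeq v hv, map_sum, sub_eq_zero]
              exact Finset.sum_congr rfl fun k _ => by rw [map_pow]
          rw [h0, zero_mul]
        have hsk : ∀ k, ∃ σ : ℝ, π (sk k * e T) = π (C σ) * π (e T) := by
          intro k
          obtain ⟨cc, hcc⟩ := master (sk k) (hskd k)
          exact ⟨_, hkey T hT _ cc (hskd k) hcc⟩
        choose σ hσ using hsk
        have hsk2 : ∀ k, π ((sk k) ^ 2 * e T) = π (C ((σ k) ^ 2)) * π (e T) := by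
          intro k
          have h1 : (sk k) ^ 2 * e T = sk k * (sk k * e T) := by ring
          have hCsq : (C ((σ k) ^ 2) : MP d) = C (σ k) * C (σ k) := by
            rw [sq, map_mul]
          calc π ((sk k) ^ 2 * e T) = π (sk k) * π (sk k * e T) := by rw [h1, map_mul]
            _ = π (sk k) * (π (C (σ k)) * π (e T)) := by rw [hσ k]
            _ = π (C (σ k)) * (π (sk k) * π (e T)) := by ring
            _ = π (C (σ k)) * π (sk k * e T) := by rw [map_mul]
            _ = π (C (σ k)) * (π (C (σ k)) * π (e T)) := by rw [hσ k]
            _ = π (C ((σ k) ^ 2)) * π (e T) := by rw [hCsq, map_mul]; ring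
        have hexpand : (g - 1 - ∑ k, (sk k) ^ 2) * e T
            = g * e T - e T - ∑ k, (sk k) ^ 2 * e T := by
          rw [sub_mul, sub_mul, one_mul, Finset.sum_mul]
        rw [hexpand, map_sub, map_sub, hge, map_sum,
          Finset.sum_congr rfl (fun k _ => hsk2 k), ← Finset.sum_mul, ← map_sum,
          ← map_sum] at hq
        -- hq : 0 - π (e T) - π (C (∑ k, σ k ^ 2)) * π (e T) = 0
        have hmain : π (C (1 + ∑ k, (σ k) ^ 2)) * π (e T) = 0 := by
          rw [map_add, map_one, map_add, map_one, add_mul, one_mul]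
          linear_combination -hq
        have hpos : (1 + ∑ k, (σ k) ^ 2) ≠ 0 := by positivity
        have hinv : π (C (1 + ∑ k, (σ k) ^ 2)⁻¹) * π (C (1 + ∑ k, (σ k) ^ 2)) = 1 := by
          rw [← map_mul, ← map_mul, inv_mul_cancel₀ hpos, map_one, map_one]
        calc π (e T) = (π (C (1 + ∑ k, (σ k) ^ 2)⁻¹) * π (C (1 + ∑ k, (σ k) ^ 2))) * π (e T) := by
              rw [hinv, one_mul]
          _ = π (C (1 + ∑ k, (σ k) ^ 2)⁻¹) * (π (C (1 + ∑ k, (σ k) ^ 2)) * π (e T)) := by ring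
          _ = 0 := by rw [hmain, mul_zero]
      rw [hfull T hT f, heT0, mul_zero]
  -- ### conclusion ###
  have hπf : π f = 0 := by
    have h1 : π f = π (f * ∑ T ∈ B.powerset, e T) := by rw [hsum1, mul_one]
    rw [h1, Finset.mul_sum, map_sum]
    exact Finset.sum_eq_zero fun T hT => hterm T hT
  exact Ideal.Quotient.eq_zero_iff_mem.mp hπf


end Main

end ThetaOneAux

/-- If a finite point configuration `V ⊆ ℝ^d` has Theta rank `1`, then
its vanishing ideal admits a generating set consisting of polynomials of degree at
most `2`. -/
theorem vanishingIdeal_generated_in_degree_two_of_theta_one {d : ℕ}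
    (V : Set (Fin d → ℝ)) (hVfin : V.Finite) (hTh : thetaRank V ≤ 1) :
    ∃ G : Set (MvPolynomial (Fin d) ℝ),
      (∀ g ∈ G, g.totalDegree ≤ 2) ∧ Ideal.span G = MvPolynomial.vanishingIdeal ℝ V := by
  classical
  refine ⟨{q : MvPolynomial (Fin d) ℝ | q.totalDegree ≤ 2 ∧ ∀ v ∈ V, eval v q = 0},
    fun g hg => hg.1, ?_⟩
  apply le_antisymm
  · rw [Ideal.span_le]
    intro q hq
    exact MvPolynomial.mem_vanishingIdeal_iff.mpr hq.2
  · rcases V.eq_empty_or_nonempty with rfl | hVne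
    · intro f _
      have h1 : (1 : MvPolynomial (Fin d) ℝ) ∈
          Ideal.span {q : MvPolynomial (Fin d) ℝ |
            q.totalDegree ≤ 2 ∧ ∀ v ∈ (∅ : Set (Fin d → ℝ)), eval v q = 0} :=
        Ideal.subset_span ⟨by simp, fun v hv => absurd hv (Set.notMem_empty v)⟩
      have h2 : Ideal.span {q : MvPolynomial (Fin d) ℝ |
          q.totalDegree ≤ 2 ∧ ∀ v ∈ (∅ : Set (Fin d → ℝ)), eval v q = 0} = ⊤ :=
        (Ideal.eq_top_iff_one _).mpr h1
      rw [h2]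
      trivial
    · exact ThetaOneAux.main_incl V hVfin hVne (ThetaOneAux.H1_of_theta V hVfin hTh)
end
end

section
/- Let M = (E, 𝓑) be a matroid of rank r. The vanishing ideal I(V_M) ⊆ ℝ[x_e : e ∈ E] of the base configuration V_M is generated by the polynomials x_e² − x_e for all e ∈ E, the polynomial (Σ_{e∈E} x_e) − r, and the squarefree monomials x^C = Π_{e∈C} x_e for all circuits C of M. -/
open MvPolynomial Set

noncomputable section

/-- The base configuration of a matroid: the 0/1 indicator vectors of its bases. -/
def baseConfig {α : Type} (M : Matroid α) : Set (α → ℝ) :=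
  {x | ∃ B, M.IsBase B ∧ x = Set.indicator B 1}

open scoped Classical

/-- A circuit of a matroid: an inclusion-minimal dependent set. -/
def IsCircuit {α : Type} (M : Matroid α) (C : Set α) : Prop :=
  M.Dep C ∧ ∀ D, D ⊂ C → ¬ M.Dep D

/-- The generators `x_e² − x_e` (`e ∈ E`), `(Σ_{e∈E} x_e) − r`, and `x^C` (`C` a circuit)
for the vanishing ideal of the base configuration of a rank-`r` matroid. -/
noncomputable def matroidIdealGens {α : Type} [Fintype α] (M : Matroid α) (r : ℕ) :
    Set (MvPolynomial α ℝ) :=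
  {g | ∃ e : α, g = X e ^ 2 - X e} ∪
    {(∑ e : α, X e) - C (r : ℝ)} ∪
    {g | ∃ Ci : Set α, IsCircuit M Ci ∧ g = ∏ e ∈ Finset.univ.filter (· ∈ Ci), X e}

section Aux


variable {α : Type} [Fintype α]

/-- cube point attached to a finset -/
noncomputable def cpt (S : Finset α) : α → ℝ := fun e => if e ∈ S then 1 else 0

noncomputable def pS (S : Finset α) : MvPolynomial α ℝ :=
  ∏ e : α, if e ∈ S then X e else 1 - X e

lemma eval_pS (S T : Finset α) : eval (cpt T) (pS S) = if S = T then 1 else 0 := by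
  rw [pS, map_prod]
  by_cases h : S = T
  · subst h
    rw [if_pos rfl]
    apply Finset.prod_eq_one
    intro e _
    by_cases he : e ∈ S <;> simp [he, cpt]
  · rw [if_neg h]
    have hex : ∃ e, ¬ (e ∈ S ↔ e ∈ T) := by
      by_contra hc
      push_neg at hc
      exact h (Finset.ext fun e => hc e)
    obtain ⟨e, he⟩ := hex
    apply Finset.prod_eq_zero (Finset.mem_univ e)
    by_cases h1 : e ∈ S
    · have h2 : e ∉ T := fun h2 => he ⟨fun _ => h2, fun _ => h1⟩
      simp [h1, h2, cpt]
    · have h2 : e ∈ T := by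
        by_contra h2
        exact he ⟨fun h' => absurd h' h1, fun h' => absurd h' h2⟩
      simp [h1, h2, cpt]

noncomputable def boolSpan (α : Type) [Fintype α] : Ideal (MvPolynomial α ℝ) :=
  Ideal.span {g | ∃ e : α, g = X e ^ 2 - X e}

lemma eval_cpt_boolSpan {p : MvPolynomial α ℝ} (hp : p ∈ boolSpan α) (T : Finset α) :
    eval (cpt T) p = 0 := by
  have hle : boolSpan α ≤ MvPolynomial.vanishingIdeal ℝ {v : α → ℝ | ∃ T : Finset α, v = cpt T} := by
    rw [boolSpan, Ideal.span_le]
    rintro g ⟨e, rfl⟩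
    rw [SetLike.mem_coe, mem_vanishingIdeal_iff]
    rintro v ⟨T, rfl⟩
    by_cases he : e ∈ T <;> simp [cpt, he]
  exact (mem_vanishingIdeal_iff.mp (hle hp)) _ ⟨T, rfl⟩

noncomputable def sqf (m : α →₀ ℕ) : α →₀ ℕ := Finsupp.mapRange (fun n => min n 1) (by simp) m

lemma sqf_apply (m : α →₀ ℕ) (e : α) : sqf m e = min (m e) 1 := rfl

lemma monomial_sub_sqf_mem (m : α →₀ ℕ) :
    monomial m (1:ℝ) - monomial (sqf m) 1 ∈ boolSpan α := by
  suffices h : ∀ n (m : α →₀ ℕ), (∑ a : α, m a) = n →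
      monomial m (1:ℝ) - monomial (sqf m) 1 ∈ boolSpan α from h _ m rfl
  intro n
  induction n using Nat.strong_induction_on with
  | _ n ih =>
    intro m hm
    by_cases h : ∀ e, m e ≤ 1
    · have hsq : sqf m = m := by
        ext a
        rw [sqf_apply]
        exact min_eq_left (h a)
      rw [hsq, sub_self]
      exact zero_mem _
    · push_neg at h
      obtain ⟨e, he⟩ := h
      have h2 : 2 ≤ m e := he
      set m' := m - Finsupp.single e 1 with hm'
      have hm1 : (m - Finsupp.single e 2) + Finsupp.single e 2 = m := by
        ext a
        rw [Finsupp.add_apply, Finsupp.tsub_apply, Finsupp.single_apply]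
        split
        · next hh => subst hh; omega
        · omega
      have hm2 : (m - Finsupp.single e 2) + Finsupp.single e 1 = m' := by
        ext a
        rw [hm', Finsupp.add_apply, Finsupp.tsub_apply, Finsupp.tsub_apply,
          Finsupp.single_apply, Finsupp.single_apply]
        split
        · next hh => subst hh; omega
        · omega
      have hx1 : (X e : MvPolynomial α ℝ) = monomial (Finsupp.single e 1) 1 := by
        rw [← X_pow_eq_monomial, pow_one]
      have key : monomial m (1:ℝ) - monomial m' 1
          = monomial (m - Finsupp.single e 2) 1 * (X e ^ 2 - X e) := by
        rw [mul_sub, X_pow_eq_monomial, hx1, monomial_mul, monomial_mul, one_mul, hm1, hm2]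
      have hsqeq : sqf m' = sqf m := by
        ext a
        rw [sqf_apply, sqf_apply, hm', Finsupp.tsub_apply, Finsupp.single_apply]
        split
        · next hh => subst hh; omega
        · omega
      have hlt : (∑ a : α, m' a) < n := by
        rw [← hm]
        apply Finset.sum_lt_sum
        · intro a _
          rw [hm', Finsupp.tsub_apply]
          omega
        · refine ⟨e, Finset.mem_univ e, ?_⟩
          rw [hm', Finsupp.tsub_apply, Finsupp.single_apply, if_pos rfl]
          omega
      have ihm := ih _ hlt m' rfl
      have hsplit : monomial m (1:ℝ) - monomial (sqf m) 1
          = (monomial m 1 - monomial m' 1) + (monomial m' 1 - monomial (sqf m') 1) := by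
        rw [hsqeq]; ring
      rw [hsplit, key]
      exact add_mem (Ideal.mul_mem_left _ _ (Ideal.subset_span ⟨e, rfl⟩)) ihm

noncomputable def mSet (S : Finset α) : α →₀ ℕ := ∑ e ∈ S, Finsupp.single e 1

lemma mSet_apply (S : Finset α) (a : α) : mSet S a = if a ∈ S then 1 else 0 := by
  rw [mSet, Finset.sum_apply']
  simp [Finsupp.single_apply, Finset.sum_ite_eq' S a]

lemma mSet_support (S : Finset α) : (mSet S).support = S := by
  ext a
  rw [Finsupp.mem_support_iff, mSet_apply]
  split <;> simp_all

lemma eq_mSet_support {m : α →₀ ℕ} (h : ∀ e, m e ≤ 1) : m = mSet m.support := by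
  ext a
  rw [mSet_apply]
  by_cases ha : a ∈ m.support
  · rw [if_pos ha]
    have := Finsupp.mem_support_iff.mp ha
    have := h a
    omega
  · rw [if_neg ha]
    exact Finsupp.notMem_support_iff.mp ha

lemma multilinear_eq_zero {g : MvPolynomial α ℝ}
    (hml : ∀ m ∈ g.support, ∀ e, m e ≤ 1)
    (hv : ∀ T : Finset α, eval (cpt T) g = 0) : g = 0 := by
  have key : ∀ n (S : Finset α), S.card = n → coeff (mSet S) g = 0 := by
    intro n
    induction n using Nat.strong_induction_on with
    | _ n ih =>
      intro S hS
      have hev := hv S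
      rw [eval_eq] at hev
      have hterm : ∀ m ∈ g.support,
          coeff m g * ∏ e ∈ m.support, cpt S e ^ m e
            = if m = mSet S then coeff (mSet S) g else 0 := by
        intro m hm
        by_cases hms : m = mSet S
        · rw [if_pos hms, hms, mSet_support]
          have hone : ∏ e ∈ S, cpt S e ^ (mSet S) e = 1 := by
            apply Finset.prod_eq_one
            intro e heS
            simp [cpt, heS]
          rw [hone, mul_one]
        · rw [if_neg hms]
          by_cases hsub : m.support ⊆ S
          · have hmeq : m = mSet m.support := eq_mSet_support (hml m hm)
            have hne : m.support ≠ S := fun hh => hms (by rw [hmeq, hh])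
            have hlt : m.support.card < n := by
              rw [← hS]
              exact Finset.card_lt_card ⟨hsub, fun hc => hne (Finset.Subset.antisymm hsub hc)⟩
            have hz : coeff m g = 0 := by rw [hmeq]; exact ih _ hlt m.support rfl
            rw [hz, zero_mul]
          · obtain ⟨e, hes, heS⟩ := Finset.not_subset.mp hsub
            have hz : ∏ e ∈ m.support, cpt S e ^ m e = 0 := by
              apply Finset.prod_eq_zero hes
              have hme : m e ≠ 0 := Finsupp.mem_support_iff.mp hes
              simp [cpt, heS, zero_pow hme]
            rw [hz, mul_zero]
      rw [Finset.sum_congr rfl hterm, Finset.sum_ite_eq' g.support (mSet S)] at hev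
      by_cases hin : mSet S ∈ g.support
      · rwa [if_pos hin] at hev
      · exact MvPolynomial.notMem_support_iff.mp hin
  ext m
  rw [coeff_zero]
  by_cases hm : m ∈ g.support
  · have hmeq : m = mSet m.support := eq_mSet_support (hml m hm)
    rw [hmeq]
    exact key _ _ rfl
  · exact MvPolynomial.notMem_support_iff.mp hm

lemma mem_boolSpan_of_vanish {f : MvPolynomial α ℝ}
    (hf : ∀ T : Finset α, eval (cpt T) f = 0) : f ∈ boolSpan α := by
  set g : MvPolynomial α ℝ := ∑ m ∈ f.support, monomial (sqf m) (coeff m f) with hg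
  have hfg : f - g ∈ boolSpan α := by
    have hfeq : f - g = ∑ m ∈ f.support,
        (monomial m (coeff m f) - monomial (sqf m) (coeff m f)) := by
      rw [Finset.sum_sub_distrib, ← hg]
      congr 1
      exact f.as_sum
    rw [hfeq]
    apply sum_mem
    intro m _
    have : monomial m (coeff m f) - monomial (sqf m) (coeff m f)
        = MvPolynomial.C (coeff m f) * (monomial m 1 - monomial (sqf m) 1) := by
      rw [mul_sub, C_mul_monomial, C_mul_monomial, mul_one]
    rw [this]
    exact Ideal.mul_mem_left _ _ (monomial_sub_sqf_mem m)
  have hgv : ∀ T : Finset α, eval (cpt T) g = 0 := by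
    intro T
    have h1 := eval_cpt_boolSpan hfg T
    rw [map_sub] at h1
    have h2 := hf T
    linarith
  have hml : ∀ m ∈ g.support, ∀ e, m e ≤ 1 := by
    intro m hm e
    rw [MvPolynomial.mem_support_iff, hg, MvPolynomial.coeff_sum] at hm
    by_contra hc
    apply hm
    apply Finset.sum_eq_zero
    intro m' _
    rw [MvPolynomial.coeff_monomial, if_neg]
    intro hh
    apply hc
    rw [← hh, sqf_apply]
    omega
  have hg0 : g = 0 := multilinear_eq_zero hml hgv
  rw [hg0, sub_zero] at hfg
  exact hfg

lemma eval_cpt_sumX (r : ℕ) (T : Finset α) :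
    eval (cpt T) ((∑ e : α, X e) - MvPolynomial.C (r:ℝ)) = (T.card : ℝ) - r := by
  rw [map_sub, map_sum, eval_C]
  congr 1
  simp only [eval_X, cpt]
  rw [Finset.sum_boole]
  congr 2
  exact Finset.filter_univ_mem T

lemma indicator_eq_cpt (B : Set α) : Set.indicator B (1 : α → ℝ) = cpt B.toFinset := by
  funext e
  by_cases he : e ∈ B <;> simp [cpt, he, Set.indicator_apply]

lemma exists_circuit_subset (M : Matroid α) :
    ∀ n (S : Set α), S.ncard ≤ n → M.Dep S → ∃ Ci, Ci ⊆ S ∧ IsCircuit M Ci := by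
  intro n
  induction n using Nat.strong_induction_on with
  | _ n ih =>
    intro S hS hdep
    by_cases h : ∀ D, D ⊂ S → ¬ M.Dep D
    · exact ⟨S, subset_rfl, hdep, h⟩
    · push_neg at h
      obtain ⟨D, hDS, hD⟩ := h
      have hc := Set.ncard_lt_ncard hDS S.toFinite
      obtain ⟨Ci, h1, h2⟩ := ih D.ncard (by omega) D le_rfl hD
      exact ⟨Ci, h1.trans hDS.subset, h2⟩

lemma base_of_indep_ncard (M : Matroid α) (r : ℕ) (hr : ∀ B, M.IsBase B → B.ncard = r)
    {S : Set α} (hS : M.Indep S) (hcard : S.ncard = r) : M.IsBase S := by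
  obtain ⟨B, hB, hSB⟩ := hS.exists_isBase_superset
  have hEq : S = B := Set.eq_of_subset_of_ncard_le hSB (by rw [hr B hB, hcard]) B.toFinite
  rwa [hEq]

lemma prod_circuit_dvd (S Cfin : Finset α) (hsub : Cfin ⊆ S) :
    ∃ q, pS S = (∏ e ∈ Cfin, X e : MvPolynomial α ℝ) * q := by
  refine ⟨(∏ e ∈ S \ Cfin, X e) * ∏ e ∈ Finset.univ.filter (· ∉ S), (1 - X e), ?_⟩
  rw [pS, Finset.prod_ite, Finset.filter_univ_mem, ← Finset.prod_sdiff hsub]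
  ring

end Aux

/-- For a matroid `M = (E, 𝓑)` of rank `r` (with `E` finite), the
vanishing ideal of the base configuration `V_M` is generated by the polynomials
`x_e² − x_e` for `e ∈ E`, the polynomial `(Σ_{e∈E} x_e) − r`, and the squarefree
monomials `x^C` for the circuits `C` of `M`. -/
theorem vanishingIdeal_baseConfig_eq_span {α : Type} [Fintype α] (M : Matroid α) (r : ℕ)
    (hE : M.E = Set.univ) (hr : ∀ B, M.IsBase B → B.ncard = r) :
    MvPolynomial.vanishingIdeal ℝ (baseConfig M) = Ideal.span (matroidIdealGens M r) := by
  apply le_antisymm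
  · -- vanishing ideal ≤ span
    intro f hf
    rw [mem_vanishingIdeal_iff] at hf
    have hfS : ∀ S : Finset α, M.IsBase ↑S → eval (cpt S) f = 0 := by
      intro S hS
      have h1 := hf _ ⟨↑S, hS, rfl⟩
      rwa [indicator_eq_cpt, Finset.toFinset_coe] at h1
    have hBJ : boolSpan α ≤ Ideal.span (matroidIdealGens M r) :=
      Ideal.span_mono (fun g hg => Set.mem_union_left _ (Set.mem_union_left _ hg))
    have hsumJ : (∑ e : α, X e) - MvPolynomial.C (r:ℝ) ∈ Ideal.span (matroidIdealGens M r) :=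
      Ideal.subset_span (Set.mem_union_left _ (Set.mem_union_right _ rfl))
    have hpSJ : ∀ S : Finset α, ¬ M.IsBase ↑S → pS S ∈ Ideal.span (matroidIdealGens M r) := by
      intro S hSb
      by_cases hind : M.Indep ↑S
      · have hcard : (↑S : Set α).ncard ≠ r := fun h => hSb (base_of_indep_ncard M r hr hind h)
        rw [Set.ncard_coe_finset] at hcard
        have hc : (S.card : ℝ) - r ≠ 0 := by
          intro h
          exact hcard (by exact_mod_cast sub_eq_zero.mp h)
        have hq : MvPolynomial.C ((S.card:ℝ) - r)⁻¹ *
            (((∑ e : α, X e) - MvPolynomial.C (r:ℝ)) * pS S) ∈ Ideal.span (matroidIdealGens M r) :=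
          Ideal.mul_mem_left _ _ (Ideal.mul_mem_right _ _ hsumJ)
        have hnv : pS S - MvPolynomial.C ((S.card:ℝ) - r)⁻¹ *
            (((∑ e : α, X e) - MvPolynomial.C (r:ℝ)) * pS S) ∈ boolSpan α := by
          apply mem_boolSpan_of_vanish
          intro T
          rw [map_sub, map_mul, map_mul, eval_C, eval_cpt_sumX, eval_pS]
          by_cases h : S = T
          · subst h
            rw [if_pos rfl, mul_one]
            field_simp
            ring
          · rw [if_neg h]
            ring
        have hsum := add_mem (hBJ hnv) hq
        simpa using hsum
      · have hdep : M.Dep ↑S := M.dep_of_not_indep hind (by rw [hE]; exact Set.subset_univ _)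
        obtain ⟨Ci, hCiS, hCi⟩ := exists_circuit_subset M (↑S : Set α).ncard ↑S le_rfl hdep
        have hsub : Finset.univ.filter (· ∈ Ci) ⊆ S := by
          intro e he
          exact hCiS (Finset.mem_filter.mp he).2
        obtain ⟨q, hq⟩ := prod_circuit_dvd S _ hsub
        rw [hq]
        exact Ideal.mul_mem_right _ _
          (Ideal.subset_span (Set.mem_union_right _ ⟨Ci, hCi, rfl⟩))
    set h' : MvPolynomial α ℝ := ∑ S : Finset α, MvPolynomial.C (eval (cpt S) f) * pS S with hh
    have hdiff : f - h' ∈ boolSpan α := by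
      apply mem_boolSpan_of_vanish
      intro T
      rw [map_sub, hh, map_sum]
      have hcongr : ∀ S ∈ Finset.univ, eval (cpt T) (MvPolynomial.C (eval (cpt S) f) * pS S)
          = if S = T then eval (cpt S) f else 0 := by
        intro S _
        rw [map_mul, eval_C, eval_pS]
        split <;> simp
      rw [Finset.sum_congr rfl hcongr, Finset.sum_ite_eq' Finset.univ T,
        if_pos (Finset.mem_univ T)]
      ring
    have hh'J : h' ∈ Ideal.span (matroidIdealGens M r) := by
      rw [hh]
      apply sum_mem
      intro S _
      by_cases hb : M.IsBase ↑S
      · rw [hfS S hb, map_zero, zero_mul]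
        exact zero_mem _
      · exact Ideal.mul_mem_left _ _ (hpSJ S hb)
    have hfin := add_mem (hBJ hdiff) hh'J
    simpa using hfin
  · -- span ≤ vanishing ideal
    rw [Ideal.span_le]
    rintro g hg
    rw [SetLike.mem_coe, mem_vanishingIdeal_iff]
    rintro v ⟨B, hB, rfl⟩
    rcases hg with (⟨e, rfl⟩ | hg) | ⟨Ci, hCi, rfl⟩
    · rw [map_sub, map_pow, aeval_X]
      by_cases he : e ∈ B <;> simp [Set.indicator_apply, he]
    · rw [Set.mem_singleton_iff] at hg
      subst hg
      rw [indicator_eq_cpt]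
      change eval (cpt B.toFinset) _ = 0
      rw [eval_cpt_sumX, sub_eq_zero]
      rw [← Set.ncard_eq_toFinset_card' B, hr B hB]
    · have hnsub : ¬ Ci ⊆ B := fun hsub => (hCi.1).not_indep (hB.indep.subset hsub)
      obtain ⟨e, heCi, heB⟩ := Set.not_subset.mp hnsub
      rw [map_prod]
      apply Finset.prod_eq_zero (Finset.mem_filter.mpr ⟨Finset.mem_univ e, heCi⟩)
      rw [aeval_X]
      simp [Set.indicator_apply, heB]
end
end

section
/- Every real 4×4 matrix H with H_{ii} = 0 for all i and H_{ij}² = 1 for all i ≠ j (i.e., zero diagonal and all off-diagonal entries equal to ±1) is nonsingular: det H ≠ 0. Equivalently, every Hadamard square root of the 4×4 matrix A₀ with zero diagonal and all off-diagonal entries 1 has rank 4, so Hrk(A₀) = 4. -/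
set_option linter.unnecessarySeqFocus false
set_option maxHeartbeats 1000000

/-- Every real `4 × 4` matrix with zero diagonal whose off-diagonal
entries are all `±1` is nonsingular.  Equivalently, every Hadamard square root of the
`4 × 4` matrix `A₀` with zero diagonal and off-diagonal entries `1` has rank `4`, i.e.
`Hrk(A₀) = 4`. -/
theorem det_ne_zero_of_hadamard_sqrt (H : Matrix (Fin 4) (Fin 4) ℝ)
    (hdiag : ∀ i, H i i = 0) (hoff : ∀ i j, i ≠ j → (H i j) ^ 2 = 1) :
    H.det ≠ 0 := by
  have hsq : ∀ i j, i ≠ j → H i j = 1 ∨ H i j = -1 := by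
    intro i j h
    have h1 : H i j * H i j = 1 := by rw [← sq]; exact hoff i j h
    exact mul_self_eq_one_iff.mp h1
  set M : Matrix (Fin 4) (Fin 4) ℤ :=
    fun i j => if i = j then 0 else if H i j = 1 then 1 else -1 with hM
  have hH : H = M.map (fun x => (x : ℝ)) := by
    ext i j
    by_cases h : i = j
    · simp [Matrix.map, hM, h, hdiag]
    · rcases hsq i j h with h1 | h1 <;> simp [Matrix.map, hM, h, h1] <;> norm_num
  have hdet : H.det = ((M.det : ℤ) : ℝ) := by
    rw [hH]
    exact (RingHom.map_det (Int.castRingHom ℝ) M).symm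
  have hmod : ((M.det : ℤ) : ZMod 2) = 1 := by
    have h2 : ((M.det : ℤ) : ZMod 2) = (M.map (fun x => (x : ZMod 2))).det :=
      RingHom.map_det (Int.castRingHom (ZMod 2)) M
    have h3 : M.map (fun x => (x : ZMod 2)) =
        Matrix.of (fun i j => if i = j then (0 : ZMod 2) else 1) := by
      ext i j
      simp only [Matrix.map_apply, Matrix.of_apply]; simp only [hM]
      split
      · simp
      · split <;> decide
    rw [h2, h3]
    decide
  have hMne : M.det ≠ 0 := by
    intro h0
    rw [h0] at hmod
    simp at hmod
  rw [hdet]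
  exact_mod_cast hMne
end
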